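/- Let M ≥ 1 be an integer, let λ* > 1 satisfy T_M(λ*) = 3, let x_j = cos((2j+1)π/(2M)) for j = 0, …, M-1 be the roots of T_M, and define the SRJ relaxation factors ω_j = (λ*+1)/(2(λ*-x_j)). Then for every λ ∈ ℝ, ∏_{j=0}^{M-1} [(1-ω_j) + ω_j λ] = T_M(f(λ))/3, where f(λ) = ((λ*+1)λ + (λ*-1))/2. That is, the amplification polynomial of the SRJ scheme with relaxation factors ω_0, …, ω_{M-1} is exactly the scaled, affinely transformed Chebyshev polynomial T_M(f(λ))/3. -/

import Mathlib

open Polynomial Polynomial.Chebyshev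

lemma T_deg_coeff (n : ℕ) :
    (T ℝ (n : ℤ)).degree ≤ (n : WithBot ℕ) ∧
    (T ℝ ((n : ℤ) + 1)).degree ≤ ((n + 1 : ℕ) : WithBot ℕ) ∧
    (T ℝ ((n : ℤ) + 1)).coeff (n + 1) = 2 ^ n := by
  induction n with
  | zero =>
    refine ⟨?_, ?_, ?_⟩
    · simp [T_zero]
    · simpa [T_one] using degree_X_le (R := ℝ)
    · simp [T_one]
  | succ n ih =>
    obtain ⟨h0, h1, h2⟩ := ih
    have e : T ℝ (((n + 1 : ℕ) : ℤ) + 1)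
        = X * T ℝ ((n : ℤ) + 1) + X * T ℝ ((n : ℤ) + 1) - T ℝ (n : ℤ) := by
      have := T_add_two ℝ (n : ℤ)
      push_cast
      rw [show ((n : ℤ) + 1 + 1) = (n : ℤ) + 2 by ring, this]
      ring
    have hXp : (X * T ℝ ((n : ℤ) + 1)).degree ≤ ((n + 2 : ℕ) : WithBot ℕ) := by
      refine le_trans (degree_mul_le _ _) ?_
      calc X.degree + (T ℝ ((n:ℤ)+1)).degree ≤ 1 + ((n + 1 : ℕ) : WithBot ℕ) :=
            add_le_add degree_X_le h1
        _ = ((n + 2 : ℕ) : WithBot ℕ) := by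
            push_cast
            ring
    refine ⟨h1, ?_, ?_⟩
    · rw [e]
      refine le_trans (degree_sub_le _ _) (max_le (le_trans (degree_add_le _ _)
        (max_le ?_ ?_)) ?_) <;> try exact hXp
      exact le_trans h0 (by exact_mod_cast WithBot.coe_le_coe.2 (by omega))
    · have hc0 : (T ℝ (n : ℤ)).coeff (n + 2) = 0 := by
        refine coeff_eq_zero_of_degree_lt (lt_of_le_of_lt h0 ?_)
        exact_mod_cast WithBot.coe_lt_coe.2 (by omega)
      rw [e]
      simp only [coeff_sub, coeff_add, show n + 1 + 1 = (n + 1) + 1 from rfl, coeff_X_mul, hc0]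
      rw [h2]
      ring

lemma cheb_factor (M : ℕ) (hM : 1 ≤ M) (x : Fin M → ℝ)
    (hx : ∀ j : Fin M, x j = Real.cos ((2 * (j : ℕ) + 1) * Real.pi / (2 * M))) :
    T ℝ (M : ℤ) = C ((2 : ℝ) ^ (M - 1)) * ∏ j : Fin M, (X - C (x j)) := by
  have hMpos : (0 : ℝ) < M := by exact_mod_cast hM
  have hπ := Real.pi_pos
  set Q : ℝ[X] := ∏ j : Fin M, (X - C (x j)) with hQ
  have hQmonic : Q.Monic := monic_prod_of_monic _ _ fun j _ => monic_X_sub_C _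
  have hQdeg : Q.natDegree = M := by
    rw [hQ, natDegree_prod_of_monic _ _ fun j _ => monic_X_sub_C _]
    simp
  set P : ℝ[X] := C ((2 : ℝ) ^ (M - 1)) * Q with hP
  have hPdeg : P.natDegree ≤ M := by
    refine le_trans natDegree_mul_le ?_
    simp [hQdeg]
  have hPcoeff : P.coeff M = 2 ^ (M - 1) := by
    rw [hP, coeff_C_mul, ← hQdeg, hQmonic.coeff_natDegree, mul_one]
  -- degree and top coefficient of T
  obtain ⟨_, hTdeg', hTcoeff'⟩ := T_deg_coeff (M - 1)
  have hM1 : M - 1 + 1 = M := Nat.succ_pred_eq_of_pos hM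
  have hMZ : ((M - 1 : ℕ) : ℤ) + 1 = (M : ℤ) := by omega
  rw [hMZ, hM1] at hTdeg' hTcoeff'
  -- x is injective
  have hxinj : Function.Injective x := by
    have hmono : StrictMono fun j : Fin M => (2 * (j : ℕ) + 1) * Real.pi / (2 * M) := by
      intro a b hab
      have hab' : ((a : ℕ) : ℝ) < (b : ℕ) := by exact_mod_cast hab
      dsimp only
      rw [div_lt_div_iff_of_pos_right (by positivity)]
      nlinarith
    have hmem : ∀ j : Fin M, (2 * (j : ℕ) + 1) * Real.pi / (2 * M) ∈ Set.Icc 0 Real.pi := by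
      intro j
      constructor
      · positivity
      · rw [div_le_iff₀ (by positivity)]
        have hj : ((j : ℕ) : ℝ) + 1 ≤ M := by exact_mod_cast j.2
        nlinarith
    intro a b hab
    exact hmono.injective (Real.injOn_cos (hmem a) (hmem b) (by rw [← hx a, ← hx b]; exact hab))
  -- x j are roots of T
  have hroot : ∀ j : Fin M, (T ℝ (M : ℤ)).eval (x j) = 0 := by
    intro j
    rw [hx j, T_real_cos, Real.cos_eq_zero_iff]
    refine ⟨(j : ℕ), ?_⟩
    push_cast
    field_simp
  -- the difference vanishes
  have hcsub : ∀ m : ℕ, M ≤ m → (T ℝ (M : ℤ) - P).coeff m = 0 := by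
    intro m hm
    rcases eq_or_lt_of_le hm with rfl | hlt
    · simp [coeff_sub, hTcoeff', hPcoeff]
    · rw [coeff_sub,
        coeff_eq_zero_of_degree_lt (lt_of_le_of_lt hTdeg' (by exact_mod_cast hlt)),
        coeff_eq_zero_of_natDegree_lt (lt_of_le_of_lt hPdeg hlt)]
      ring
  have hD : T ℝ (M : ℤ) - P = 0 := by
    refine eq_zero_of_natDegree_lt_card_of_eval_eq_zero _ hxinj (fun j => ?_) ?_
    · simp only [eval_sub, hroot j, hP, eval_mul, hQ, eval_prod, eval_sub, eval_X, eval_C]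
      rw [Finset.prod_eq_zero (Finset.mem_univ j) (by ring)]
      ring
    · rw [Fintype.card_fin]
      by_cases h0 : T ℝ (M : ℤ) - P = 0
      · rw [h0]; simp; omega
      · rw [natDegree_lt_iff_degree_lt h0, degree_lt_iff_coeff_zero]
        exact fun m hm => hcsub m (by exact_mod_cast hm)
  exact sub_eq_zero.mp hD

/-- With the SRJ relaxation factors `ω_j = (λ*+1)/(2(λ*-x_j))` built from the Chebyshev
roots `x_j`, the amplification polynomial `∏ j [(1-ω_j) + ω_j λ]` equals `T_M(f(λ))/3`. -/
theorem stmt15 (M : ℕ) (hM : 1 ≤ M) (lamstar : ℝ) (hlam : 1 < lamstar)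
    (hT : (Polynomial.Chebyshev.T ℝ (M : ℤ)).eval lamstar = 3)
    (x ω : Fin M → ℝ)
    (hx : ∀ j : Fin M, x j = Real.cos ((2 * (j : ℕ) + 1) * Real.pi / (2 * M)))
    (hω : ∀ j, ω j = (lamstar + 1) / (2 * (lamstar - x j)))
    (f : ℝ → ℝ)
    (hf : ∀ lam, f lam = ((lamstar + 1) * lam + (lamstar - 1)) / 2) :
    ∀ lam : ℝ, ∏ j : Fin M, ((1 - ω j) + ω j * lam)
      = (Polynomial.Chebyshev.T ℝ (M : ℤ)).eval (f lam) / 3 := by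
  intro lam
  have hfact := cheb_factor M hM x hx
  have hxlt : ∀ j, 0 < lamstar - x j := fun j =>
    sub_pos.2 (lt_of_le_of_lt (le_of_eq_of_le (hx j) (Real.cos_le_one _)) hlam)
  have h3 : (3 : ℝ) = 2 ^ (M - 1) * ∏ j, (lamstar - x j) := by
    rw [← hT, hfact]
    simp [eval_prod]
  have hTf : (T ℝ (M : ℤ)).eval (f lam) = 2 ^ (M - 1) * ∏ j, (f lam - x j) := by
    rw [hfact]
    simp [eval_prod]
  have hkey : ∀ j, ((1 - ω j) + ω j * lam) * (lamstar - x j) = f lam - x j := by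
    intro j
    have hne := (hxlt j).ne'
    rw [hω j, hf]
    field_simp
    ring
  have hprod : (∏ j, ((1 - ω j) + ω j * lam)) * ∏ j, (lamstar - x j)
      = ∏ j, (f lam - x j) := by
    rw [← Finset.prod_mul_distrib]
    exact Finset.prod_congr rfl fun j _ => hkey j
  have hne : (∏ j, (lamstar - x j)) ≠ 0 := Finset.prod_ne_zero_iff.2 fun j _ => (hxlt j).ne'
  have h2ne : ((2 : ℝ) ^ (M - 1)) ≠ 0 := by positivity
  rw [hTf, ← hprod, h3]
  field_simp
  exact Finset.prod_congr rfl fun j _ => by ring
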